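/- For a real smooth function b on the circle, b·(Λb) − (𝓗b)·(Db) = 2b₊·Λ(conj b₊) + 2(conj b₊)·Λb₊, where b₊ = b̂₀/2 + Σ_{k≥1} b̂_k e^{ikθ}. -/

import Mathlib

/-- The Fourier mode `e^{inθ}` on the circle. -/
noncomputable def fm (n : ℤ) (θ : ℝ) : ℂ := Complex.exp ((n : ℂ) * (θ : ℂ) * Complex.I)

lemma fm_norm (n : ℤ) (θ : ℝ) : ‖fm n θ‖ = 1 := by
  have : (n : ℂ) * (θ : ℂ) * Complex.I = ((n * θ : ℝ) : ℂ) * Complex.I := by push_cast; ring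
  rw [fm, this, Complex.norm_exp_ofReal_mul_I]

lemma fm_zero (θ : ℝ) : fm 0 θ = 1 := by simp [fm]

/-- Split a summable `ℤ`-indexed tsum into the `0` term, positive part, negative part. -/
lemma tsum_int_split (f : ℤ → ℂ) (hf : Summable f) :
    ∑' n : ℤ, f n = f 0 + (∑' k : ℕ, f ((k : ℤ) + 1)) + ∑' k : ℕ, f (-((k : ℤ) + 1)) := by
  have h1 : Summable fun n : ℕ => f n :=
    hf.comp_injective Nat.cast_injective
  have h2 : Summable fun n : ℕ => f (-((n : ℤ) + 1)) := by
    have : Summable (f ∘ Int.negSucc) := hf.comp_injective (by exact @Int.negSucc.inj)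
    exact this.congr fun n => by rw [Function.comp_apply, Int.negSucc_eq]
  rw [tsum_of_nat_of_neg_add_one h1 h2, Summable.tsum_eq_zero_add h1]
  simp only [Nat.cast_zero]
  congr 2

/- STATEMENT 13: for a real smooth function `b` on the circle, encoded by its rapidly
   decreasing Fourier coefficients `c : ℤ → ℂ` (with `c(−n) = conj(c n)`),
   `b·(Λb) − (𝓗b)·(Db) = 2 b₊·Λ(conj b₊) + 2 (conj b₊)·Λ(b₊)`, where
   `b₊ = c₀/2 + Σ_{k≥1} c_k e^{ikθ}`, `conj b₊ = conj(c₀)/2 + Σ_{k≥1} conj(c_k) e^{-ikθ}`,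
   `Λ b₊ = Σ_{k≥1} k c_k e^{ikθ}`, `Λ(conj b₊) = Σ_{k≥1} k conj(c_k) e^{-ikθ}`. -/
theorem stmt_13 (c : ℤ → ℂ)
    (hreal : ∀ n : ℤ, c (-n) = (starRingEnd ℂ) (c n))
    (hdecay : ∀ k : ℕ, Summable (fun n : ℤ => (|n| : ℝ) ^ k * ‖c n‖)) :
    ∀ θ : ℝ,
      (∑' n : ℤ, c n * fm n θ) * (∑' n : ℤ, ((|n| : ℤ) : ℂ) * c n * fm n θ)
          - (∑' n : ℤ, (Int.sign n : ℂ) * c n * fm n θ) *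
            (∑' n : ℤ, (n : ℂ) * c n * fm n θ)
        = 2 * (c 0 / 2 + ∑' k : ℕ, c ((k : ℤ) + 1) * fm ((k : ℤ) + 1) θ) *
            (∑' k : ℕ, ((k : ℂ) + 1) * (starRingEnd ℂ) (c ((k : ℤ) + 1)) *
              fm (-((k : ℤ) + 1)) θ)
          + 2 * ((starRingEnd ℂ) (c 0) / 2 +
              ∑' k : ℕ, (starRingEnd ℂ) (c ((k : ℤ) + 1)) * fm (-((k : ℤ) + 1)) θ) *
            (∑' k : ℕ, ((k : ℂ) + 1) * c ((k : ℤ) + 1) * fm ((k : ℤ) + 1) θ) := by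
  intro θ
  -- summability facts
  have h0 : Summable fun n : ℤ => ‖c n‖ := by simpa using hdecay 0
  have h1 : Summable fun n : ℤ => (|n| : ℝ) * ‖c n‖ := by simpa using hdecay 1
  have hbound : Summable fun n : ℤ => ‖c n‖ + (|n| : ℝ) * ‖c n‖ := h0.add h1
  have key : ∀ w : ℤ → ℂ, (∀ n, ‖w n‖ ≤ 1 + (|n| : ℝ)) →
      Summable fun n : ℤ => w n * c n * fm n θ := by
    intro w hw
    apply Summable.of_norm_bounded hbound
    intro n
    rw [norm_mul, norm_mul, fm_norm, mul_one]
    calc ‖w n‖ * ‖c n‖ ≤ (1 + (|n| : ℝ)) * ‖c n‖ :=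
          mul_le_mul_of_nonneg_right (hw n) (norm_nonneg _)
      _ = ‖c n‖ + (|n| : ℝ) * ‖c n‖ := by ring
  have hB : Summable fun n : ℤ => c n * fm n θ := by
    have := key (fun _ => 1) (fun n => by
      rw [norm_one]; linarith [abs_nonneg ((n : ℝ))])
    simpa using this
  have hL : Summable fun n : ℤ => ((|n| : ℤ) : ℂ) * c n * fm n θ := by
    apply key
    intro n
    rw [Complex.norm_intCast]
    push_cast
    rw [abs_abs]
    linarith [abs_nonneg (n : ℝ)]
  have hH : Summable fun n : ℤ => (Int.sign n : ℂ) * c n * fm n θ := by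
    apply key
    intro n
    rw [Complex.norm_intCast]
    have : |Int.sign n| ≤ 1 := by
      rcases Int.lt_trichotomy n 0 with h | h | h
      · rw [Int.sign_eq_neg_one_of_neg h]; decide
      · subst h; decide
      · rw [Int.sign_eq_one_of_pos h]; decide
    calc |(Int.sign n : ℝ)| ≤ 1 := by exact_mod_cast this
      _ ≤ 1 + |(n : ℝ)| := by linarith [abs_nonneg ((n : ℝ))]
  have hD : Summable fun n : ℤ => (n : ℂ) * c n * fm n θ := by
    apply key
    intro n
    rw [Complex.norm_intCast]
    push_cast
    linarith [abs_nonneg (n : ℝ)]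
  -- split each ℤ-sum
  rw [tsum_int_split _ hB, tsum_int_split _ hL, tsum_int_split _ hH, tsum_int_split _ hD]
  -- rewrite conjugates on the RHS using hreal
  have hc0 : (starRingEnd ℂ) (c 0) = c 0 := by
    have := hreal 0; simp at this; exact this.symm
  have hck : ∀ k : ℕ, (starRingEnd ℂ) (c ((k : ℤ) + 1)) = c (-((k : ℤ) + 1)) :=
    fun k => (hreal ((k : ℤ) + 1)).symm
  simp only [hc0, hck]
  -- simplify coefficients
  have e1 : ∀ k : ℕ, ((|(k : ℤ) + 1| : ℤ) : ℂ) = (k : ℂ) + 1 := by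
    intro k
    have : |(k : ℤ) + 1| = (k : ℤ) + 1 := abs_of_nonneg (by positivity)
    rw [this]; push_cast; ring
  have e2 : ∀ k : ℕ, ((|-((k : ℤ) + 1)| : ℤ) : ℂ) = (k : ℂ) + 1 := by
    intro k
    rw [abs_neg]; exact e1 k
  have e3 : ∀ k : ℕ, ((Int.sign ((k : ℤ) + 1) : ℤ) : ℂ) = 1 := by
    intro k
    rw [Int.sign_eq_one_of_pos (by positivity)]; simp
  have e4 : ∀ k : ℕ, ((Int.sign (-((k : ℤ) + 1)) : ℤ) : ℂ) = -1 := by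
    intro k
    rw [Int.sign_eq_neg_one_of_neg (by omega)]; simp
  simp only [e1, e2, e3, e4, fm_zero, abs_zero, Int.cast_zero, Int.sign_zero,
    zero_mul, mul_one, one_mul, mul_zero, Int.cast_neg]
  have e7 : ∀ k : ℕ, (-1 : ℂ) * c (-((k : ℤ) + 1)) * fm (-((k : ℤ) + 1)) θ
      = -(c (-((k : ℤ) + 1)) * fm (-((k : ℤ) + 1)) θ) := fun k => by ring
  have e8 : ∀ k : ℕ, (((k : ℤ) + 1 : ℤ) : ℂ) * c ((k : ℤ) + 1) * fm ((k : ℤ) + 1) θ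
      = ((k : ℂ) + 1) * c ((k : ℤ) + 1) * fm ((k : ℤ) + 1) θ := fun k => by push_cast; ring
  have e9 : ∀ k : ℕ, (-(((k : ℤ) + 1 : ℤ) : ℂ)) * c (-((k : ℤ) + 1)) * fm (-((k : ℤ) + 1)) θ
      = -(((k : ℂ) + 1) * c (-((k : ℤ) + 1)) * fm (-((k : ℤ) + 1)) θ) := fun k => by
        push_cast; ring
  simp only [e7, e8, e9, tsum_neg]
  ring
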